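/- In dimension d ≤ 3, there exists C > 0 (depending only on d) such that for all ε ∈ (0,1) and all integers L with Lε ≥ 1, every u ∈ ℓ²(ℤ^d/(2L+1)ℤ^d) with ‖u‖₂ = 1 and ⟨-Δ_L^P u, u⟩ ≤ ε² satisfies ‖u‖₄ ≤ C ε^{d/4}. -/

import Mathlib

open Finset

/-- The discrete torus `ℤ^d/(2L+1)ℤ^d`, i.e. the cube `Λ_L = [-L,L]^d ∩ ℤ^d`
with periodic identification. -/
abbrev DTorus (d L : ℕ) := Fin d → ZMod (2 * L + 1)

/-- The discrete Laplacian `-Δ` with periodic boundary conditions: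
`(-Δu)(β) = Σ_{j} (2u(β) - u(β+e_j) - u(β-e_j))`. -/
noncomputable def dLap (d L : ℕ) (u : DTorus d L → ℂ) (β : DTorus d L) : ℂ :=
  ∑ j : Fin d,
    (2 * u β - u (β + fun i => if i = j then 1 else 0)
      - u (β - fun i => if i = j then 1 else 0))

/-- The discrete Dirichlet energy `⟨-Δ_L^P u, u⟩`. -/
noncomputable def dEnergy (d L : ℕ) (u : DTorus d L → ℂ) : ℝ :=
  (∑ β : DTorus d L, (starRingEnd ℂ) (u β) * dLap d L u β).re

/-- The discrete Fourier transform
`û(γ) = (2L+1)^{-d/2} Σ_β u(β) e^{-2πi γ·β/(2L+1)}`. -/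
noncomputable def dft (d L : ℕ) (u : DTorus d L → ℂ) (γ : DTorus d L) : ℂ :=
  (((2 * L + 1 : ℝ) ^ (-(d : ℝ) / 2) : ℝ) : ℂ) *
    ∑ β : DTorus d L, u β *
      Complex.exp (-2 * Real.pi * Complex.I *
        ((∑ j : Fin d, (γ j).val * (β j).val : ℕ) : ℂ) / ((2 * L + 1 : ℕ) : ℂ))

/-- The symbol of the discrete Laplacian:
`h(γ) = 2d - 2 Σ_j cos(2πγ_j/(2L+1))`. -/
noncomputable def dSymb (d L : ℕ) (γ : DTorus d L) : ℝ :=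
  2 * d - 2 * ∑ j : Fin d, Real.cos (2 * Real.pi * (γ j).val / (2 * L + 1))

/-- The absolute value `|x|` of `x ∈ ℤ/(2L+1)ℤ` for the representative in `[-L, L]`. -/
def dAbs (L : ℕ) (x : ZMod (2 * L + 1)) : ℕ := min x.val (2 * L + 1 - x.val)

-- Auxiliary lemmas

def eVec (d L : ℕ) (j : Fin d) : DTorus d L := fun i => if i = j then 1 else 0

lemma sum_shift {G M : Type*} [AddCommGroup G] [Fintype G] [AddCommMonoid M]
    (f : G → M) (v : G) : ∑ β, f (β + v) = ∑ β, f β :=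
  Fintype.sum_equiv (Equiv.addRight v) _ _ (fun _ => rfl)

lemma var_bound {G : Type*} [AddCommGroup G] [Fintype G] (f : G → ℂ) (v : G) :
    ∑ β, |‖f (β + v)‖ ^ 2 - ‖f β‖ ^ 2|
      ≤ 2 * Real.sqrt (∑ β, ‖f (β + v) - f β‖ ^ 2) * Real.sqrt (∑ β, ‖f β‖ ^ 2) := by
  have h1 : ∀ β : G, |‖f (β + v)‖ ^ 2 - ‖f β‖ ^ 2|
      ≤ ‖f (β + v) - f β‖ * (‖f (β + v)‖ + ‖f β‖) := by
    intro β
    have h : ‖f (β + v)‖ ^ 2 - ‖f β‖ ^ 2 = (‖f (β + v)‖ - ‖f β‖) * (‖f (β + v)‖ + ‖f β‖) := by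
      ring
    rw [h, abs_mul, abs_of_nonneg (by positivity : (0:ℝ) ≤ ‖f (β + v)‖ + ‖f β‖)]
    exact mul_le_mul_of_nonneg_right (abs_norm_sub_norm_le _ _) (by positivity)
  have h2 : ∑ β : G, (‖f (β + v)‖ + ‖f β‖) ^ 2 ≤ 4 * ∑ β, ‖f β‖ ^ 2 := by
    have key : ∀ β : G, (‖f (β + v)‖ + ‖f β‖) ^ 2 ≤ 2 * (‖f (β+v)‖^2 + ‖f β‖^2) := by
      intro β; nlinarith [sq_nonneg (‖f (β+v)‖ - ‖f β‖)]
    calc ∑ β : G, (‖f (β + v)‖ + ‖f β‖) ^ 2 ≤ ∑ β : G, 2 * (‖f (β+v)‖^2 + ‖f β‖^2) :=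
          Finset.sum_le_sum fun β _ => key β
      _ = 4 * ∑ β, ‖f β‖ ^ 2 := by
          simp only [mul_add, Finset.sum_add_distrib, ← Finset.mul_sum,
            sum_shift (fun β => ‖f β‖ ^ 2) v]
          ring
  calc ∑ β, |‖f (β + v)‖ ^ 2 - ‖f β‖ ^ 2|
      ≤ ∑ β, ‖f (β + v) - f β‖ * (‖f (β + v)‖ + ‖f β‖) := Finset.sum_le_sum fun β _ => h1 β
    _ ≤ Real.sqrt (∑ β, ‖f (β + v) - f β‖ ^ 2) *
        Real.sqrt (∑ β, (‖f (β + v)‖ + ‖f β‖) ^ 2) := Real.sum_mul_le_sqrt_mul_sqrt _ _ _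
    _ ≤ Real.sqrt (∑ β, ‖f (β + v) - f β‖ ^ 2) * Real.sqrt (4 * ∑ β, ‖f β‖ ^ 2) := by
        gcongr
        try exact h2
    _ = 2 * Real.sqrt (∑ β, ‖f (β + v) - f β‖ ^ 2) * Real.sqrt (∑ β, ‖f β‖ ^ 2) := by
        rw [Real.sqrt_mul (by norm_num), show Real.sqrt 4 = 2 by
          rw [show (4:ℝ) = 2^2 by norm_num, Real.sqrt_sq (by norm_num)]]
        ring

lemma energy_eq (d L : ℕ) (u : DTorus d L → ℂ) :
    dEnergy d L u = ∑ j : Fin d, ∑ β, ‖u (β + eVec d L j) - u β‖ ^ 2 := by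
  have key : ∀ j : Fin d,
      ∑ β, (starRingEnd ℂ) (u β) *
        (2 * u β - u (β + eVec d L j) - u (β - eVec d L j))
      = ∑ β, (starRingEnd ℂ) (u (β + eVec d L j) - u β) * (u (β + eVec d L j) - u β) := by
    intro j
    set v := eVec d L j
    have hshift1 : ∑ β, (starRingEnd ℂ) (u (β + v)) * u (β + v)
        = ∑ β, (starRingEnd ℂ) (u β) * u β := sum_shift (fun β => (starRingEnd ℂ) (u β) * u β) v
    have hshift2 : ∑ β, (starRingEnd ℂ) (u (β + v)) * u β
        = ∑ β, (starRingEnd ℂ) (u β) * u (β - v) := by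
      have := sum_shift (fun β => (starRingEnd ℂ) (u (β + v)) * u β) (-v)
      simpa [sub_eq_add_neg] using this.symm
    simp only [map_sub, sub_mul, mul_sub, Finset.sum_sub_distrib]
    rw [hshift1, hshift2]
    have h2 : ∑ x : DTorus d L, (starRingEnd ℂ) (u x) * (2 * u x)
        = 2 * ∑ x : DTorus d L, (starRingEnd ℂ) (u x) * u x := by
      rw [Finset.mul_sum]; exact Finset.sum_congr rfl fun x _ => by ring
    rw [h2]; ring
  calc dEnergy d L u
      = ∑ j : Fin d, (∑ β, (starRingEnd ℂ) (u β) *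
          (2 * u β - u (β + eVec d L j) - u (β - eVec d L j))).re := by
        rw [dEnergy]
        simp only [dLap, Finset.mul_sum]
        rw [Finset.sum_comm, Complex.re_sum]
        rfl
    _ = ∑ j : Fin d, ∑ β, ‖u (β + eVec d L j) - u β‖ ^ 2 := by
        refine Finset.sum_congr rfl fun j _ => ?_
        rw [key j, Complex.re_sum]
        refine Finset.sum_congr rfl fun β _ => ?_
        rw [← Complex.normSq_eq_conj_mul_self]
        simp [Complex.normSq_eq_norm_sq, ← Complex.ofReal_pow]

lemma agmon {n : ℕ} [NeZero n] (g : ZMod n → ℝ) (x : ZMod n) :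
    g x ≤ (∑ y, g y) / n + ∑ y, |g (y + 1) - g y| := by
  obtain ⟨x₀, -, hmin⟩ := Finset.exists_min_image univ g ⟨x, mem_univ x⟩
  have hn : (0:ℝ) < n := by
    have := NeZero.pos n; exact_mod_cast this
  have hx₀ : g x₀ ≤ (∑ y, g y) / n := by
    rw [le_div_iff₀ hn]
    have h := Finset.card_nsmul_le_sum univ g (g x₀) (fun y _ => hmin y (mem_univ y))
    rw [Finset.card_univ, ZMod.card] at h
    calc g x₀ * n = n • g x₀ := by rw [nsmul_eq_mul]; ring
      _ ≤ ∑ y, g y := h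
  set k := (x - x₀).val with hk
  have hxk : x₀ + (k : ZMod n) = x := by
    rw [hk, ZMod.natCast_val, ZMod.cast_id]; ring
  have tele : g x - g x₀ = ∑ t ∈ range k, (g (x₀ + (t:ZMod n) + 1) - g (x₀ + (t:ZMod n))) := by
    have h := Finset.sum_range_sub (fun t : ℕ => g (x₀ + (t:ZMod n))) k
    simp only [Nat.cast_add, Nat.cast_one, ← add_assoc] at h
    rw [h]
    simp [hxk]
  have hbd : ∑ t ∈ range k, (g (x₀ + (t:ZMod n) + 1) - g (x₀ + (t:ZMod n)))
      ≤ ∑ y, |g (y + 1) - g y| := by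
    calc ∑ t ∈ range k, (g (x₀ + (t:ZMod n) + 1) - g (x₀ + (t:ZMod n)))
        ≤ ∑ t ∈ range k, |g (x₀ + (t:ZMod n) + 1) - g (x₀ + (t:ZMod n))| :=
          Finset.sum_le_sum fun t _ => le_abs_self _
      _ = ∑ y ∈ (range k).image (fun t : ℕ => x₀ + (t:ZMod n)), |g (y + 1) - g y| := by
          rw [Finset.sum_image]
          intro a ha b hb hab
          have hkn : k ≤ n := le_of_lt (ZMod.val_lt _)
          have ha' : a < n := lt_of_lt_of_le (mem_range.mp ha) hkn
          have hb' : b < n := lt_of_lt_of_le (mem_range.mp hb) hkn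
          have h1 : (a : ZMod n) = (b : ZMod n) := add_left_cancel hab
          have h2 := congrArg ZMod.val h1
          rwa [ZMod.val_cast_of_lt ha', ZMod.val_cast_of_lt hb'] at h2
      _ ≤ ∑ y, |g (y + 1) - g y| :=
          Finset.sum_le_sum_of_subset_of_nonneg (Finset.subset_univ _)
            (fun y _ _ => abs_nonneg _)
  linarith

lemma dir_energy (d L : ℕ) (u : DTorus d L → ℂ) (ε : ℝ)
    (hen : dEnergy d L u ≤ ε^2) (j : Fin d) :
    ∑ β, ‖u (β + eVec d L j) - u β‖^2 ≤ ε^2 := by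
  have h : ∑ β, ‖u (β + eVec d L j) - u β‖^2 ≤ dEnergy d L u := by
    rw [energy_eq]
    exact Finset.single_le_sum (f := fun j => ∑ β, ‖u (β + eVec d L j) - u β‖^2)
      (fun i _ => Finset.sum_nonneg fun β _ => by positivity) (mem_univ j)
  linarith

lemma var_le (d L : ℕ) (u : DTorus d L → ℂ) (ε : ℝ) (hε : 0 ≤ ε)
    (hmass : (∑ β, ‖u β‖ ^ 2) = 1) (hen : dEnergy d L u ≤ ε^2) (j : Fin d) :
    ∑ β, |‖u (β + eVec d L j)‖^2 - ‖u β‖^2| ≤ 2*ε := by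
  have h := var_bound u (eVec d L j)
  rw [hmass, Real.sqrt_one, mul_one] at h
  refine h.trans ?_
  have h2 : Real.sqrt (∑ β, ‖u (β + eVec d L j) - u β‖^2) ≤ ε := by
    have := Real.sqrt_le_sqrt (dir_energy d L u ε hen j)
    rwa [Real.sqrt_sq hε] at this
  linarith

lemma ninv_le (ε : ℝ) (hε : 0 < ε) (L : ℕ) (hL : 1 ≤ ε * L) :
    (1:ℝ) / ((2*L+1 : ℕ):ℝ) ≤ ε / 2 := by
  have hn : (0:ℝ) < ((2*L+1 : ℕ):ℝ) := by positivity
  rw [div_le_div_iff₀ hn (by norm_num)]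
  push_cast
  nlinarith

lemma sum_d1 (L : ℕ) (F : DTorus 1 L → ℝ) :
    ∑ β, F β = ∑ x : ZMod (2*L+1), F (fun _ => x) := by
  apply Fintype.sum_equiv (Equiv.funUnique (Fin 1) (ZMod (2*L+1))) F _ ?_
  intro β
  congr 1
  funext i
  rw [Subsingleton.elim i default]
  rfl

lemma shift_d1 (L : ℕ) (x : ZMod (2*L+1)) :
    (fun _ : Fin 1 => x) + eVec 1 L 0 = (fun _ => x + 1) := by
  funext i; rw [Subsingleton.elim i 0]; simp [eVec]

lemma case1 (ε : ℝ) (hε : 0 < ε) (L : ℕ) (hL : 1 ≤ ε * L)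
    (u : DTorus 1 L → ℂ) (hmass : (∑ β, ‖u β‖ ^ 2) = 1) (hen : dEnergy 1 L u ≤ ε ^ 2) :
    (∑ β, ‖u β‖ ^ 4) ≤ 81 * ε ^ 1 := by
  set g : ZMod (2*L+1) → ℝ := fun x => ‖u (fun _ => x)‖^2 with hg
  have hg1 : ∑ x, g x = 1 := by
    rw [← sum_d1 L (fun β => ‖u β‖^2)]; exact hmass
  have hvar : ∑ x, |g (x+1) - g x| ≤ 2*ε := by
    have h := var_le 1 L u ε hε.le hmass hen 0
    rw [sum_d1 L (fun β => |‖u (β + eVec 1 L 0)‖^2 - ‖u β‖^2|)] at h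
    refine le_of_eq_of_le ?_ h
    refine (Finset.sum_congr rfl fun x _ => ?_).symm
    rw [shift_d1]
  have hmax : ∀ x, g x ≤ ε/2 + 2*ε := by
    intro x
    have h := agmon g x
    rw [hg1] at h
    have h2 := ninv_le ε hε L hL
    calc g x ≤ 1 / ((2*L+1:ℕ):ℝ) + ∑ y, |g (y+1) - g y| := by
          refine h.trans ?_; push_cast; rfl
      _ ≤ ε/2 + 2*ε := by gcongr  -- hope: add_le_add h2 hvar
  have hfinal : ∑ β, ‖u β‖ ^ 4 = ∑ x, (g x)^2 := by
    rw [sum_d1 L (fun β => ‖u β‖^4)]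
    exact Finset.sum_congr rfl fun x _ => by rw [hg]; ring
  rw [hfinal]
  have : ∑ x, (g x)^2 ≤ ∑ x, (ε/2 + 2*ε) * g x := by
    refine Finset.sum_le_sum fun x _ => ?_
    have h0 : 0 ≤ g x := by positivity
    nlinarith [hmax x]
  rw [← Finset.mul_sum, hg1] at this
  nlinarith

lemma sum_d2 (L : ℕ) (F : DTorus 2 L → ℝ) :
    ∑ β, F β = ∑ x : ZMod (2*L+1), ∑ y : ZMod (2*L+1), F ![x, y] := by
  have h1 : ∑ β, F β = ∑ p : ZMod (2*L+1) × ZMod (2*L+1), F ![p.1, p.2] :=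
    Fintype.sum_equiv (piFinTwoEquiv (fun _ => ZMod (2*L+1))) F _
      (fun β => by congr 1; funext i; fin_cases i <;> rfl)
  rw [h1, Fintype.sum_prod_type]

lemma shift_d2_0 (L : ℕ) (x y : ZMod (2*L+1)) :
    (![x, y] : DTorus 2 L) + eVec 2 L 0 = ![x+1, y] := by
  funext i; fin_cases i <;> simp [eVec]

lemma shift_d2_1 (L : ℕ) (x y : ZMod (2*L+1)) :
    (![x, y] : DTorus 2 L) + eVec 2 L 1 = ![x, y+1] := by
  funext i; fin_cases i <;> simp [eVec]

lemma case2 (ε : ℝ) (hε : 0 < ε) (L : ℕ) (hL : 1 ≤ ε * L)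
    (u : DTorus 2 L → ℂ) (hmass : (∑ β, ‖u β‖ ^ 2) = 1) (hen : dEnergy 2 L u ≤ ε ^ 2) :
    (∑ β, ‖u β‖ ^ 4) ≤ 81 * ε ^ 2 := by
  set g : ZMod (2*L+1) → ZMod (2*L+1) → ℝ := fun x y => ‖u ![x, y]‖^2 with hg
  have hg0 : ∀ x y, 0 ≤ g x y := fun x y => by positivity
  have hg1 : ∑ x, ∑ y, g x y = 1 := by
    rw [← sum_d2 L (fun β => ‖u β‖^2)]; exact hmass
  have hvar1 : ∑ x, ∑ y, |g (x+1) y - g x y| ≤ 2*ε := by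
    have h := var_le 2 L u ε hε.le hmass hen 0
    rw [sum_d2 L (fun β => |‖u (β + eVec 2 L 0)‖^2 - ‖u β‖^2|)] at h
    refine le_of_eq_of_le ?_ h
    refine (Finset.sum_congr rfl fun x _ => (Finset.sum_congr rfl fun y _ => ?_)).symm
    rw [shift_d2_0]
  have hvar2 : ∑ x, ∑ y, |g x (y+1) - g x y| ≤ 2*ε := by
    have h := var_le 2 L u ε hε.le hmass hen 1
    rw [sum_d2 L (fun β => |‖u (β + eVec 2 L 1)‖^2 - ‖u β‖^2|)] at h
    refine le_of_eq_of_le ?_ h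
    refine (Finset.sum_congr rfl fun x _ => (Finset.sum_congr rfl fun y _ => ?_)).symm
    rw [shift_d2_1]
  have hne : (univ : Finset (ZMod (2*L+1))).Nonempty := univ_nonempty
  set M1 : ZMod (2*L+1) → ℝ := fun y => univ.sup' hne (fun x => g x y) with hM1
  set M2 : ZMod (2*L+1) → ℝ := fun x => univ.sup' hne (fun y => g x y) with hM2
  have hgM1 : ∀ x y, g x y ≤ M1 y := fun x y => Finset.le_sup' (fun x => g x y) (mem_univ x)
  have hgM2 : ∀ x y, g x y ≤ M2 x := fun x y => Finset.le_sup' (fun y => g x y) (mem_univ y)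
  have hM1n : ∀ y, 0 ≤ M1 y := fun y => (hg0 0 y).trans (hgM1 0 y)
  have hM2n : ∀ x, 0 ≤ M2 x := fun x => (hg0 x 0).trans (hgM2 x 0)
  have h2 := ninv_le ε hε L hL
  have hM1sum : ∑ y, M1 y ≤ 5/2 * ε := by
    have key : ∀ y, M1 y ≤ (∑ x, g x y)/((2*L+1:ℕ):ℝ) + ∑ x, |g (x+1) y - g x y| := by
      intro y
      refine Finset.sup'_le _ _ fun x _ => ?_
      have h := agmon (fun x => g x y) x
      refine h.trans ?_; push_cast; rfl
    calc ∑ y, M1 y ≤ ∑ y, ((∑ x, g x y)/((2*L+1:ℕ):ℝ) + ∑ x, |g (x+1) y - g x y|) :=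
          Finset.sum_le_sum fun y _ => key y
      _ = (∑ y, ∑ x, g x y)/((2*L+1:ℕ):ℝ) + ∑ y, ∑ x, |g (x+1) y - g x y| := by
          rw [Finset.sum_add_distrib, Finset.sum_div]
      _ ≤ ε/2 + 2*ε := by
          have e1 : ∑ y, ∑ x, g x y = 1 := by rw [Finset.sum_comm]; exact hg1
          have e2 : ∑ y, ∑ x, |g (x+1) y - g x y| ≤ 2*ε := by
            rw [Finset.sum_comm]; exact hvar1
          rw [e1]
          exact add_le_add h2 e2
      _ ≤ 5/2 * ε := by linarith
  have hM2sum : ∑ x, M2 x ≤ 5/2 * ε := by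
    have key : ∀ x, M2 x ≤ (∑ y, g x y)/((2*L+1:ℕ):ℝ) + ∑ y, |g x (y+1) - g x y| := by
      intro x
      refine Finset.sup'_le _ _ fun y _ => ?_
      have h := agmon (fun y => g x y) y
      refine h.trans ?_; push_cast; rfl
    calc ∑ x, M2 x ≤ ∑ x, ((∑ y, g x y)/((2*L+1:ℕ):ℝ) + ∑ y, |g x (y+1) - g x y|) :=
          Finset.sum_le_sum fun x _ => key x
      _ = (∑ x, ∑ y, g x y)/((2*L+1:ℕ):ℝ) + ∑ x, ∑ y, |g x (y+1) - g x y| := by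
          rw [Finset.sum_add_distrib, Finset.sum_div]
      _ ≤ ε/2 + 2*ε := by rw [hg1]; exact add_le_add h2 hvar2
      _ ≤ 5/2 * ε := by linarith
  have hfinal : ∑ β, ‖u β‖ ^ 4 = ∑ x, ∑ y, (g x y)^2 := by
    rw [sum_d2 L (fun β => ‖u β‖^4)]
    exact Finset.sum_congr rfl fun x _ => Finset.sum_congr rfl fun y _ => by rw [hg]; ring
  rw [hfinal]
  calc ∑ x, ∑ y, (g x y)^2 ≤ ∑ x, ∑ y, M1 y * M2 x := by
        refine Finset.sum_le_sum fun x _ => Finset.sum_le_sum fun y _ => ?_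
        have : (g x y)^2 = g x y * g x y := sq (g x y) ▸ rfl
        nlinarith [hgM1 x y, hgM2 x y, hg0 x y, hM1n y, hM2n x]
    _ = (∑ y, M1 y) * (∑ x, M2 x) := by
        rw [Finset.sum_comm]
        rw [← Finset.sum_mul_sum]
    _ ≤ (5/2 * ε) * (5/2 * ε) := by
        refine mul_le_mul hM1sum hM2sum (Finset.sum_nonneg fun x _ => hM2n x) (by linarith)
    _ ≤ 81 * ε ^ 2 := by nlinarith

def prodEquiv3 (X : Type*) : (X × X × X) ≃ (Fin 3 → X) where
  toFun p := ![p.1, p.2.1, p.2.2]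
  invFun β := (β 0, β 1, β 2)
  left_inv p := rfl
  right_inv β := by funext i; fin_cases i <;> rfl

lemma sum_d3 (L : ℕ) (F : DTorus 3 L → ℝ) :
    ∑ β, F β = ∑ x : ZMod (2*L+1), ∑ y : ZMod (2*L+1), ∑ z : ZMod (2*L+1), F ![x, y, z] := by
  have h1 : ∑ β, F β = ∑ p : ZMod (2*L+1) × ZMod (2*L+1) × ZMod (2*L+1),
      F ![p.1, p.2.1, p.2.2] :=
    (Fintype.sum_equiv (prodEquiv3 (ZMod (2*L+1))) _ F (fun p => rfl)).symm
  rw [h1, Fintype.sum_prod_type]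
  refine Finset.sum_congr rfl fun x _ => ?_
  rw [Fintype.sum_prod_type]

lemma shift_d3_0 (L : ℕ) (x y z : ZMod (2*L+1)) :
    (![x, y, z] : DTorus 3 L) + eVec 3 L 0 = ![x+1, y, z] := by
  funext i; fin_cases i <;> simp [eVec]

lemma shift_d3_1 (L : ℕ) (x y z : ZMod (2*L+1)) :
    (![x, y, z] : DTorus 3 L) + eVec 3 L 1 = ![x, y+1, z] := by
  funext i; fin_cases i <;> simp [eVec]

lemma shift_d3_2 (L : ℕ) (x y z : ZMod (2*L+1)) :
    (![x, y, z] : DTorus 3 L) + eVec 3 L 2 = ![x, y, z+1] := by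
  funext i; fin_cases i <;> simp [eVec]

lemma sum_rot {α M : Type*} [Fintype α] [AddCommMonoid M] (H : α → α → α → M) :
    ∑ x, ∑ y, ∑ z, H x y z = ∑ z, ∑ x, ∑ y, H x y z := by
  calc ∑ x, ∑ y, ∑ z, H x y z = ∑ x, ∑ z, ∑ y, H x y z :=
        Finset.sum_congr rfl fun x _ => Finset.sum_comm
    _ = ∑ z, ∑ x, ∑ y, H x y z := Finset.sum_comm

set_option maxHeartbeats 1000000 in
lemma case3 (ε : ℝ) (hε : 0 < ε) (L : ℕ) (hL : 1 ≤ ε * L)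
    (u : DTorus 3 L → ℂ) (hmass : (∑ β, ‖u β‖ ^ 2) = 1) (hen : dEnergy 3 L u ≤ ε ^ 2) :
    (∑ β, ‖u β‖ ^ 4) ≤ 81 * ε ^ 3 := by
  set n := 2*L+1 with hn
  set g : ZMod n → ZMod n → ZMod n → ℝ := fun x y z => ‖u ![x, y, z]‖^2 with hg
  have hg0 : ∀ x y z, 0 ≤ g x y z := fun x y z => by positivity
  -- basic transported quantities
  set s : ZMod n → ℝ := fun z => ∑ x, ∑ y, g x y z with hs
  set e1 : ZMod n → ℝ := fun z => ∑ x, ∑ y, ‖u ![x+1, y, z] - u ![x, y, z]‖^2 with he1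
  set e2 : ZMod n → ℝ := fun z => ∑ x, ∑ y, ‖u ![x, y+1, z] - u ![x, y, z]‖^2 with he2
  have hs0 : ∀ z, 0 ≤ s z := fun z =>
    Finset.sum_nonneg fun x _ => Finset.sum_nonneg fun y _ => hg0 x y z
  have he10 : ∀ z, 0 ≤ e1 z := fun z =>
    Finset.sum_nonneg fun x _ => Finset.sum_nonneg fun y _ => by positivity
  have he20 : ∀ z, 0 ≤ e2 z := fun z =>
    Finset.sum_nonneg fun x _ => Finset.sum_nonneg fun y _ => by positivity
  have hssum : ∑ z, s z = 1 := by
    have h := hmass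
    rw [sum_d3 L (fun β => ‖u β‖^2)] at h
    rw [hs, ← h]
    rw [Finset.sum_comm]
    refine Finset.sum_congr rfl fun x _ => Finset.sum_comm
  have hE1 : ∑ z, e1 z ≤ ε^2 := by
    have h := dir_energy 3 L u ε hen 0
    rw [sum_d3 L (fun β => ‖u (β + eVec 3 L 0) - u β‖^2)] at h
    simp only [shift_d3_0] at h
    refine le_of_eq_of_le ?_ h
    rw [Finset.sum_comm]
    refine Finset.sum_congr rfl fun x _ => Finset.sum_comm
  have hE2 : ∑ z, e2 z ≤ ε^2 := by
    have h := dir_energy 3 L u ε hen 1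
    rw [sum_d3 L (fun β => ‖u (β + eVec 3 L 1) - u β‖^2)] at h
    simp only [shift_d3_1] at h
    refine le_of_eq_of_le ?_ h
    rw [Finset.sum_comm]
    refine Finset.sum_congr rfl fun x _ => Finset.sum_comm
  have hninv := ninv_le ε hε L hL
  -- uniform bound on slice masses
  have hvar3 : ∑ z, ∑ x, ∑ y, |g x y (z+1) - g x y z| ≤ 2*ε := by
    have h := var_le 3 L u ε hε.le hmass hen 2
    rw [sum_d3 L (fun β => |‖u (β + eVec 3 L 2)‖^2 - ‖u β‖^2|)] at h
    simp only [shift_d3_2] at h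
    refine le_of_eq_of_le ?_ h
    rw [Finset.sum_comm]
    refine Finset.sum_congr rfl fun x _ => Finset.sum_comm
  have hsσ : ∀ z, s z ≤ 5/2 * ε := by
    intro z
    have h := agmon s z
    rw [hssum] at h
    have hvv : ∑ w, |s (w+1) - s w| ≤ 2*ε := by
      refine le_trans ?_ hvar3
      refine Finset.sum_le_sum fun w _ => ?_
      calc |s (w+1) - s w| = |∑ x, ∑ y, (g x y (w+1) - g x y w)| := by
            rw [hs]
            congr 1
            rw [← Finset.sum_sub_distrib]
            exact Finset.sum_congr rfl fun x _ => (Finset.sum_sub_distrib _ _).symm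
        _ ≤ ∑ x, ∑ y, |g x y (w+1) - g x y w| := by
            refine (Finset.abs_sum_le_sum_abs _ _).trans ?_
            exact Finset.sum_le_sum fun x _ => Finset.abs_sum_le_sum_abs _ _
    calc s z ≤ 1/((2*L+1:ℕ):ℝ) + ∑ w, |s (w+1) - s w| := by
          refine h.trans ?_; exact le_rfl
      _ ≤ ε/2 + 2*ε := add_le_add hninv hvv
      _ = 5/2 * ε := by ring
  -- per-slice variation bounds via Cauchy-Schwarz on slices
  have hline1 : ∀ z, ∑ x, ∑ y, |g (x+1) y z - g x y z|
      ≤ 2 * Real.sqrt (e1 z) * Real.sqrt (s z) := by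
    intro z
    have h := var_bound (fun p : ZMod n × ZMod n => u ![p.1, p.2, z]) (1, 0)
    simp only [Fintype.sum_prod_type, Prod.fst_add, Prod.snd_add, add_zero] at h
    simp only [hg, hs, he1]
    exact h
  have hline2 : ∀ z, ∑ x, ∑ y, |g x (y+1) z - g x y z|
      ≤ 2 * Real.sqrt (e2 z) * Real.sqrt (s z) := by
    intro z
    have h := var_bound (fun p : ZMod n × ZMod n => u ![p.1, p.2, z]) (0, 1)
    simp only [Fintype.sum_prod_type, Prod.fst_add, Prod.snd_add, add_zero] at h
    simp only [hg, hs, he2]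
    exact h
  have hne : (univ : Finset (ZMod n)).Nonempty := univ_nonempty
  set M1 : ZMod n → ZMod n → ℝ := fun y z => univ.sup' hne (fun x => g x y z) with hM1
  set M2 : ZMod n → ZMod n → ℝ := fun x z => univ.sup' hne (fun y => g x y z) with hM2
  have hgM1 : ∀ x y z, g x y z ≤ M1 y z := fun x y z =>
    Finset.le_sup' (fun x => g x y z) (mem_univ x)
  have hgM2 : ∀ x y z, g x y z ≤ M2 x z := fun x y z =>
    Finset.le_sup' (fun y => g x y z) (mem_univ y)
  have hM1n : ∀ y z, 0 ≤ M1 y z := fun y z => (hg0 0 y z).trans (hgM1 0 y z)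
  have hM2n : ∀ x z, 0 ≤ M2 x z := fun x z => (hg0 x 0 z).trans (hgM2 x 0 z)
  set A : ZMod n → ℝ := fun z => ∑ y, M1 y z with hA
  set B : ZMod n → ℝ := fun z => ∑ x, M2 x z with hB
  have hAn : ∀ z, 0 ≤ A z := fun z => Finset.sum_nonneg fun y _ => hM1n y z
  have hBn : ∀ z, 0 ≤ B z := fun z => Finset.sum_nonneg fun x _ => hM2n x z
  have hAbd : ∀ z, A z ≤ s z / ((2*L+1:ℕ):ℝ) + 2 * Real.sqrt (e1 z) * Real.sqrt (s z) := by
    intro z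
    have key : ∀ y, M1 y z ≤ (∑ x, g x y z)/((2*L+1:ℕ):ℝ) + ∑ x, |g (x+1) y z - g x y z| := by
      intro y
      refine Finset.sup'_le _ _ fun x _ => ?_
      have h := agmon (fun x => g x y z) x
      refine h.trans ?_; exact le_rfl
    calc A z ≤ ∑ y, ((∑ x, g x y z)/((2*L+1:ℕ):ℝ) + ∑ x, |g (x+1) y z - g x y z|) :=
          Finset.sum_le_sum fun y _ => key y
      _ = (∑ y, ∑ x, g x y z)/((2*L+1:ℕ):ℝ) + ∑ y, ∑ x, |g (x+1) y z - g x y z| := by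
          rw [Finset.sum_add_distrib, Finset.sum_div]
      _ ≤ s z / ((2*L+1:ℕ):ℝ) + 2 * Real.sqrt (e1 z) * Real.sqrt (s z) := by
          have e1' : ∑ y, ∑ x, g x y z = s z := by rw [Finset.sum_comm]
          have e2' : ∑ y, ∑ x, |g (x+1) y z - g x y z| ≤ 2 * Real.sqrt (e1 z) * Real.sqrt (s z) := by
            rw [Finset.sum_comm]; exact hline1 z
          rw [e1']
          exact add_le_add le_rfl e2'
  have hBbd : ∀ z, B z ≤ s z / ((2*L+1:ℕ):ℝ) + 2 * Real.sqrt (e2 z) * Real.sqrt (s z) := by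
    intro z
    have key : ∀ x, M2 x z ≤ (∑ y, g x y z)/((2*L+1:ℕ):ℝ) + ∑ y, |g x (y+1) z - g x y z| := by
      intro x
      refine Finset.sup'_le _ _ fun y _ => ?_
      have h := agmon (fun y => g x y z) y
      refine h.trans ?_; exact le_rfl
    calc B z ≤ ∑ x, ((∑ y, g x y z)/((2*L+1:ℕ):ℝ) + ∑ y, |g x (y+1) z - g x y z|) :=
          Finset.sum_le_sum fun x _ => key x
      _ = (∑ x, ∑ y, g x y z)/((2*L+1:ℕ):ℝ) + ∑ x, ∑ y, |g x (y+1) z - g x y z| := by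
          rw [Finset.sum_add_distrib, Finset.sum_div]
      _ ≤ s z / ((2*L+1:ℕ):ℝ) + 2 * Real.sqrt (e2 z) * Real.sqrt (s z) :=
          add_le_add le_rfl (hline2 z)
  -- square sums of A and B
  have hninv2 : (1:ℝ)/(((2*L+1:ℕ):ℝ))^2 ≤ ε^2/4 := by
    have hn' : (0:ℝ) < ((2*L+1:ℕ):ℝ) := by positivity
    have := ninv_le ε hε L hL
    rw [div_le_div_iff₀ (by positivity) (by norm_num)] at this ⊢
    nlinarith
  have sqbd : ∀ (e : ZMod n → ℝ), (∀ z, 0 ≤ e z) → (∑ z, e z ≤ ε^2) →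
      ∀ (F : ZMod n → ℝ), (∀ z, 0 ≤ F z) →
      (∀ z, F z ≤ s z / ((2*L+1:ℕ):ℝ) + 2 * Real.sqrt (e z) * Real.sqrt (s z)) →
      ∑ z, (F z)^2 ≤ 85/4 * ε^3 := by
    intro e he0 hesum F hF0 hFbd
    have step : ∀ z, (F z)^2 ≤ 2 * (s z)^2/(((2*L+1:ℕ):ℝ))^2 + 8 * e z * s z := by
      intro z
      have h1 : (F z)^2 ≤ (s z / ((2*L+1:ℕ):ℝ) + 2 * Real.sqrt (e z) * Real.sqrt (s z))^2 := by
        have := hFbd z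
        nlinarith [hF0 z]
      have h2 : (Real.sqrt (e z))^2 = e z := Real.sq_sqrt (he0 z)
      have h3 : (Real.sqrt (s z))^2 = s z := Real.sq_sqrt (hs0 z)
      have h4 : (s z / ((2*L+1:ℕ):ℝ) + 2 * Real.sqrt (e z) * Real.sqrt (s z))^2
          ≤ 2 * (s z / ((2*L+1:ℕ):ℝ))^2 + 2 * (2 * Real.sqrt (e z) * Real.sqrt (s z))^2 := by
        nlinarith [sq_nonneg (s z / ((2*L+1:ℕ):ℝ) - 2 * Real.sqrt (e z) * Real.sqrt (s z))]
      have h5 : (2 * Real.sqrt (e z) * Real.sqrt (s z))^2 = 4 * e z * s z := by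
        rw [mul_pow, mul_pow, h2, h3]; ring
      calc (F z)^2 ≤ (s z / ((2*L+1:ℕ):ℝ) + 2 * Real.sqrt (e z) * Real.sqrt (s z))^2 := h1
        _ ≤ 2 * (s z / ((2*L+1:ℕ):ℝ))^2 + 2 * (2 * Real.sqrt (e z) * Real.sqrt (s z))^2 := h4
        _ = 2 * (s z)^2/(((2*L+1:ℕ):ℝ))^2 + 8 * e z * s z := by
            rw [h5, div_pow]; ring
    calc ∑ z, (F z)^2 ≤ ∑ z, (2 * (s z)^2/(((2*L+1:ℕ):ℝ))^2 + 8 * e z * s z) :=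
          Finset.sum_le_sum fun z _ => step z
      _ = 2 * (∑ z, (s z)^2)/(((2*L+1:ℕ):ℝ))^2 + 8 * ∑ z, e z * s z := by
          have hpt : ∀ z : ZMod n, 2*(s z)^2/(((2*L+1:ℕ):ℝ))^2 + 8 * e z * s z
              = (2/(((2*L+1:ℕ):ℝ))^2) * (s z)^2 + 8*(e z * s z) := fun z => by ring
          simp_rw [hpt]
          rw [Finset.sum_add_distrib, ← Finset.mul_sum, ← Finset.mul_sum]
          ring
      _ ≤ 85/4 * ε^3 := by
          have b1 : ∑ z, (s z)^2 ≤ 5/2 * ε := by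
            calc ∑ z, (s z)^2 ≤ ∑ z, (5/2 * ε) * s z :=
                  Finset.sum_le_sum fun z _ => by nlinarith [hsσ z, hs0 z]
              _ = 5/2 * ε := by rw [← Finset.mul_sum, hssum, mul_one]
          have b2 : ∑ z, e z * s z ≤ 5/2 * ε * ε^2 := by
            calc ∑ z, e z * s z ≤ ∑ z, e z * (5/2 * ε) :=
                  Finset.sum_le_sum fun z _ => by nlinarith [hsσ z, he0 z]
              _ = (∑ z, e z) * (5/2 * ε) := by rw [← Finset.sum_mul]
              _ ≤ ε^2 * (5/2 * ε) := by
                  refine mul_le_mul_of_nonneg_right hesum (by positivity)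
              _ = 5/2 * ε * ε^2 := by ring
          have hn' : (0:ℝ) < (((2*L+1:ℕ):ℝ))^2 := by positivity
          have b3 : 2 * (∑ z, (s z)^2)/(((2*L+1:ℕ):ℝ))^2 ≤ 2 * (5/2*ε) * (ε^2/4) := by
            have h0 : (0:ℝ) ≤ ∑ z, (s z)^2 := Finset.sum_nonneg fun z _ => sq_nonneg _
            have h1 : (0:ℝ) ≤ 1/(((2*L+1:ℕ):ℝ))^2 := by positivity
            have hmm := mul_le_mul b1 hninv2 h1 (by positivity : (0:ℝ) ≤ 5/2*ε)
            calc 2 * (∑ z, (s z)^2)/(((2*L+1:ℕ):ℝ))^2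
                = 2 * ((∑ z, (s z)^2) * (1/(((2*L+1:ℕ):ℝ))^2)) := by ring
              _ ≤ 2 * (5/2*ε * (ε^2/4)) := by linarith
              _ = 2 * (5/2*ε) * (ε^2/4) := by ring
          nlinarith [b3, b2]
  have hA2 : ∑ z, (A z)^2 ≤ 85/4 * ε^3 := sqbd e1 he10 hE1 A hAn hAbd
  have hB2 : ∑ z, (B z)^2 ≤ 85/4 * ε^3 := sqbd e2 he20 hE2 B hBn hBbd
  -- final assembly
  have hfinal : ∑ β, ‖u β‖ ^ 4 = ∑ z, ∑ x, ∑ y, (g x y z)^2 := by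
    rw [sum_d3 L (fun β => ‖u β‖^4), ← sum_rot (fun x y z => (g x y z)^2)]
    exact Finset.sum_congr rfl fun x _ => Finset.sum_congr rfl fun y _ =>
      Finset.sum_congr rfl fun z _ => by rw [hg]; ring
  rw [hfinal]
  calc ∑ z, ∑ x, ∑ y, (g x y z)^2 ≤ ∑ z, A z * B z := by
        refine Finset.sum_le_sum fun z _ => ?_
        calc ∑ x, ∑ y, (g x y z)^2 ≤ ∑ x, ∑ y, M1 y z * M2 x z := by
              refine Finset.sum_le_sum fun x _ => Finset.sum_le_sum fun y _ => ?_
              nlinarith [hgM1 x y z, hgM2 x y z, hg0 x y z, hM1n y z, hM2n x z]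
          _ = A z * B z := by
              rw [hA, hB, Finset.sum_comm, ← Finset.sum_mul_sum]
    _ ≤ Real.sqrt (∑ z, (A z)^2) * Real.sqrt (∑ z, (B z)^2) :=
        Real.sum_mul_le_sqrt_mul_sqrt _ _ _
    _ ≤ Real.sqrt (85/4 * ε^3) * Real.sqrt (85/4 * ε^3) :=
        mul_le_mul (Real.sqrt_le_sqrt hA2) (Real.sqrt_le_sqrt hB2) (Real.sqrt_nonneg _)
          (Real.sqrt_nonneg _)
    _ = 85/4 * ε^3 := Real.mul_self_sqrt (by positivity)
    _ ≤ 81 * ε^3 := by nlinarith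

lemma rpow_finish (x ε : ℝ) (d : ℕ) (hx : 0 ≤ x) (hε : 0 < ε) (h : x ≤ 81 * ε^d) :
    x ^ ((1:ℝ)/4) ≤ 3 * ε ^ ((d:ℝ)/4) := by
  have h1 : x ^ ((1:ℝ)/4) ≤ (81 * ε^d) ^ ((1:ℝ)/4) :=
    Real.rpow_le_rpow hx h (by norm_num)
  refine h1.trans_eq ?_
  rw [Real.mul_rpow (by norm_num) (by positivity), ← Real.rpow_natCast ε d,
    ← Real.rpow_mul hε.le]
  rw [show (81:ℝ) = 3^(4:ℕ) by norm_num, ← Real.rpow_natCast (3:ℝ) 4,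
    ← Real.rpow_mul (by norm_num)]
  norm_num
  congr 1
  ring


/-- in dimension `d ≤ 3`, there is `C = C(d) > 0` such that for all
`ε ∈ (0,1)` and integers `L` with `Lε ≥ 1`, every `u ∈ ℓ²(ℤ^d/(2L+1)ℤ^d)` with
`‖u‖₂ = 1` and `⟨-Δ_L^P u, u⟩ ≤ ε²` satisfies `‖u‖₄ ≤ C ε^{d/4}`. -/
theorem l4_bound_low_dim (d : ℕ) (hd1 : 1 ≤ d) (hd3 : d ≤ 3) :
    ∃ C > (0:ℝ), ∀ ε : ℝ, 0 < ε → ε < 1 → ∀ L : ℕ, 1 ≤ ε * L →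
      ∀ u : DTorus d L → ℂ, (∑ β, ‖u β‖ ^ 2) = 1 → dEnergy d L u ≤ ε ^ 2 →
        (∑ β, ‖u β‖ ^ 4) ^ ((1:ℝ)/4) ≤ C * ε ^ ((d : ℝ) / 4) := by
  refine ⟨3, by norm_num, ?_⟩
  intro ε hε hε1 L hL u hmass hen
  have hx : (0:ℝ) ≤ ∑ β, ‖u β‖ ^ 4 := Finset.sum_nonneg fun β _ => by positivity
  refine rpow_finish _ ε d hx hε ?_
  interval_cases d
  · exact case1 ε hε L hL u hmass hen
  · exact case2 ε hε L hL u hmass hen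
  · exact case3 ε hε L hL u hmass hen
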